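/- Let n ∈ ℕ and A ∈ M_n(ℂ). If every eigenvalue of A has strictly negative real part, then for every x₀ ∈ ℂⁿ the solution t ↦ exp(tA)·x₀ of the linear system x′ = A·x tends to 0 as t → +∞. -/

import Mathlib

open NormedSpace Filter

private lemma coeff_tendsto_zero (μ : ℂ) (hμ : μ.re < 0) (k : ℕ) :
    Tendsto (fun t : ℝ => Complex.exp (t * μ) * (t : ℂ) ^ k) atTop (nhds 0) := by
  set b : ℝ := -μ.re with hb
  have hb0 : 0 < b := by simpa [hb] using hμ
  have h1 : Tendsto (fun t : ℝ => (b * t) ^ k * Real.exp (-(b * t))) atTop (nhds 0) :=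
    (Real.tendsto_pow_mul_exp_neg_atTop_nhds_zero k).comp (tendsto_id.const_mul_atTop hb0)
  have h2 : Tendsto (fun t : ℝ => (b⁻¹) ^ k * ((b * t) ^ k * Real.exp (-(b * t))))
      atTop (nhds 0) := by simpa using h1.const_mul ((b⁻¹) ^ k)
  rw [tendsto_zero_iff_norm_tendsto_zero]
  refine squeeze_zero_norm' ?_ h2
  filter_upwards [eventually_ge_atTop (0 : ℝ)] with t ht
  have hnorm : ‖Complex.exp (↑t * μ) * (t : ℂ) ^ k‖ = Real.exp (t * μ.re) * t ^ k := by
    rw [norm_mul, Complex.norm_exp, norm_pow, Complex.norm_real, Real.norm_of_nonneg ht]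
    simp
  rw [norm_norm, hnorm]
  apply le_of_eq
  have hbt : -(b * t) = t * μ.re := by rw [hb]; ring
  rw [hbt, mul_pow,
    show (b⁻¹) ^ k * (b ^ k * t ^ k * Real.exp (t * μ.re))
        = ((b⁻¹) ^ k * b ^ k) * (t ^ k * Real.exp (t * μ.re)) by ring,
    inv_pow, inv_mul_cancel₀ (pow_ne_zero k hb0.ne'), one_mul, mul_comm]

private lemma mulVec_exp_eq (n : ℕ) (M : Matrix (Fin n) (Fin n) ℂ) (x : Fin n → ℂ) :
    (exp M).mulVec x = ∑' k : ℕ, ((Nat.factorial k : ℂ)⁻¹) • (M ^ k).mulVec x := by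
  letI : SeminormedRing (Matrix (Fin n) (Fin n) ℂ) := Matrix.linftyOpSemiNormedRing
  letI : NormedRing (Matrix (Fin n) (Fin n) ℂ) := Matrix.linftyOpNormedRing
  letI : NormedAlgebra ℂ (Matrix (Fin n) (Fin n) ℂ) := Matrix.linftyOpNormedAlgebra
  let L : Matrix (Fin n) (Fin n) ℂ →ₗ[ℂ] (Fin n → ℂ) :=
    { toFun := fun N => N.mulVec x
      map_add' := fun N P => Matrix.add_mulVec _ _ _
      map_smul' := fun c N => by simpa using Matrix.smul_mulVec c N x }
  have hL : Continuous L := L.continuous_of_finiteDimensional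
  have h : Summable fun k : ℕ => ((Nat.factorial k : ℂ)⁻¹) • M ^ k := expSeries_summable' (𝕂 := ℂ) M
  have hmap := h.hasSum.map L.toAddMonoidHom hL
  have hLe : (exp M).mulVec x = L (exp M) := rfl
  rw [hLe, exp_eq_tsum ℂ]
  refine (hmap.tsum_eq.symm.trans ?_)
  exact tsum_congr fun k => by simp [L, Matrix.smul_mulVec]

private lemma key (n : ℕ) (A : Matrix (Fin n) (Fin n) ℂ) (μ : ℂ) (hμ : μ.re < 0)
    (m : ℕ) (x : Fin n → ℂ) (hx : ((A - μ • 1) ^ m).mulVec x = 0) :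
    Tendsto (fun t : ℝ => (exp (t • A)).mulVec x) atTop (nhds 0) := by
  set B : Matrix (Fin n) (Fin n) ℂ := A - μ • 1 with hB
  have hsplit : ∀ t : ℝ, exp (t • A) = Complex.exp (t * μ) • exp (t • B) := by
    intro t
    letI : SeminormedRing (Matrix (Fin n) (Fin n) ℂ) := Matrix.linftyOpSemiNormedRing
    letI : NormedRing (Matrix (Fin n) (Fin n) ℂ) := Matrix.linftyOpNormedRing
    letI : NormedAlgebra ℂ (Matrix (Fin n) (Fin n) ℂ) := Matrix.linftyOpNormedAlgebra
    have hA' : t • A = t • (μ • (1 : Matrix (Fin n) (Fin n) ℂ)) + t • B := by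
      rw [← smul_add, hB]; congr 1; abel
    have hcomm : Commute (t • (μ • (1 : Matrix (Fin n) (Fin n) ℂ))) (t • B) :=
      ((Commute.one_left (t • B)).smul_left μ).smul_left t
    rw [hA']
    erw [exp_add_of_commute_of_mem_ball (𝕂 := ℂ) hcomm
      ((expSeries_radius_eq_top ℂ (Matrix (Fin n) (Fin n) ℂ)).symm ▸ edist_lt_top _ _)
      ((expSeries_radius_eq_top ℂ (Matrix (Fin n) (Fin n) ℂ)).symm ▸ edist_lt_top _ _)]
    have h1 : t • (μ • (1 : Matrix (Fin n) (Fin n) ℂ))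
        = algebraMap ℂ (Matrix (Fin n) (Fin n) ℂ) ((t : ℂ) * μ) := by
      rw [Algebra.algebraMap_eq_smul_one, ← smul_assoc]
      norm_num
    rw [h1, ← algebraMap_exp_comm, Algebra.algebraMap_eq_smul_one, smul_mul_assoc, one_mul,
      ← Complex.exp_eq_exp_ℂ]
    rfl
  have hexp : ∀ t : ℝ, (exp (t • B)).mulVec x
      = ∑ k ∈ Finset.range m, (((Nat.factorial k : ℂ)⁻¹ * (t : ℂ) ^ k) • (B ^ k).mulVec x) := by
    intro t
    rw [mulVec_exp_eq]
    rw [tsum_eq_sum (s := Finset.range m) ?_]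
    · refine Finset.sum_congr rfl fun k _ => ?_
      rw [smul_pow, Matrix.smul_mulVec,
        ← algebraMap_smul ℂ (t ^ k) ((B ^ k).mulVec x), smul_smul]
      congr 1
      norm_cast
    · intro k hk
      have hk' : m ≤ k := le_of_not_gt fun h => hk (Finset.mem_range.mpr h)
      have hBk : (B ^ k).mulVec x = 0 := by
        have : B ^ k = B ^ (k - m) * B ^ m := by
          rw [← pow_add, Nat.sub_add_cancel hk']
        rw [this, ← Matrix.mulVec_mulVec, hx, Matrix.mulVec_zero]
      rw [smul_pow, Matrix.smul_mulVec, hBk]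
      simp
  have heq : ∀ t : ℝ, (exp (t • A)).mulVec x
      = ∑ k ∈ Finset.range m,
          ((Complex.exp (t * μ) * (t : ℂ) ^ k * (Nat.factorial k : ℂ)⁻¹) • (B ^ k).mulVec x) := by
    intro t
    rw [hsplit t, Matrix.smul_mulVec, hexp t, Finset.smul_sum]
    refine Finset.sum_congr rfl fun k _ => ?_
    rw [smul_smul]
    ring_nf
  have htend : Tendsto (fun t : ℝ => ∑ k ∈ Finset.range m,
      ((Complex.exp (t * μ) * (t : ℂ) ^ k * (Nat.factorial k : ℂ)⁻¹) • (B ^ k).mulVec x))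
      atTop (nhds 0) := by
    have : (0 : Fin n → ℂ) = ∑ k ∈ Finset.range m, (0 : Fin n → ℂ) := by simp
    rw [this]
    refine tendsto_finset_sum _ fun k _ => ?_
    have h0 : Tendsto (fun t : ℝ => Complex.exp (t * μ) * (t : ℂ) ^ k * (Nat.factorial k : ℂ)⁻¹)
        atTop (nhds 0) := by
      simpa using (coeff_tendsto_zero μ hμ k).mul_const ((Nat.factorial k : ℂ)⁻¹)
    simpa using h0.smul_const ((B ^ k).mulVec x)
  exact htend.congr fun t => (heq t).symm

/-- If every eigenvalue of `A` has strictly negative real part, then every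
solution `t ↦ exp(tA)·x₀` of `x' = A·x` tends to `0` as `t → +∞`. -/
theorem solution_tendsto_zero_of_eigenvalues_re_neg (n : ℕ)
    (A : Matrix (Fin n) (Fin n) ℂ)
    (hA : ∀ α ∈ spectrum ℂ A, α.re < 0) :
    ∀ x₀ : Fin n → ℂ,
      Tendsto (fun t : ℝ => (exp (t • A)).mulVec x₀) atTop (nhds 0) := by
  intro x₀
  let S : Submodule ℂ (Fin n → ℂ) :=
    { carrier := {x | Tendsto (fun t : ℝ => (exp (t • A)).mulVec x) atTop (nhds 0)}
      add_mem' := fun {x} {y} hx hy => by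
        have := hx.add hy
        simpa [Matrix.mulVec_add] using this
      zero_mem' := by
        simpa [Matrix.mulVec_zero] using (tendsto_const_nhds :
          Tendsto (fun _ : ℝ => (0 : Fin n → ℂ)) atTop (nhds 0))
      smul_mem' := fun c x hx => by
        have := hx.const_smul c
        simpa [Matrix.mulVec_smul] using this }
  suffices h : x₀ ∈ S from h
  set f : Module.End ℂ (Fin n → ℂ) := Matrix.toLinAlgEquiv' A with hf
  have htop := Module.End.iSup_maxGenEigenspace_eq_top (K := ℂ) (V := Fin n → ℂ) f
  have hx₀ : x₀ ∈ ⨆ μ : ℂ, f.maxGenEigenspace μ := htop ▸ Submodule.mem_top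
  refine (iSup_le fun μ => ?_ : (⨆ μ : ℂ, f.maxGenEigenspace μ) ≤ S) hx₀
  intro x hx
  rcases (Module.End.mem_maxGenEigenspace f μ x).mp hx with ⟨k, hk⟩
  by_cases hx0 : x = 0
  · simpa [hx0] using S.zero_mem
  -- μ is an eigenvalue, hence in the spectrum of A
  have hμspec : μ ∈ spectrum ℂ A := by
    have hne : f.genEigenspace μ k ≠ ⊥ := by
      refine Submodule.ne_bot_iff _ |>.mpr ⟨x, ?_, hx0⟩
      rw [Module.End.mem_genEigenspace_nat, LinearMap.mem_ker]
      exact hk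
    have hgev : f.HasGenEigenvalue μ k := hne
    have hev : f.HasEigenvalue μ := Module.End.hasEigenvalue_of_hasGenEigenvalue hgev
    have : μ ∈ spectrum ℂ f := Module.End.hasEigenvalue_iff_mem_spectrum.mp hev
    rwa [hf, AlgEquiv.spectrum_eq] at this
  have hμ : μ.re < 0 := hA μ hμspec
  -- translate the endomorphism identity to matrices
  have hmat : ((A - μ • 1) ^ k).mulVec x = 0 := by
    have h1 : f - μ • 1 = Matrix.toLinAlgEquiv' (A - μ • 1) := by
      rw [hf, map_sub, map_smul, map_one]
    have h2 : (f - μ • 1) ^ k = Matrix.toLinAlgEquiv' ((A - μ • 1) ^ k) := by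
      rw [h1, map_pow]
    have := hk
    rw [h2] at this
    rwa [Matrix.toLinAlgEquiv'_apply] at this
  exact key n A μ hμ k x hmat
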